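/- Let p be an even positive integer with p ≡ 0 (mod 4) and let d ≥ 1. Then every equilateral set in ℓ_p^d has cardinality at most (p/2 − 1)·d + 1. -/

import Mathlib

/-- A finite set `S` in `ℝ^d` is `lam`-equilateral for the `ℓ_p` norm
(`‖x‖_p = (∑ i, |x i| ^ p) ^ (1/p)`). -/
def IsEquilateralLp {d : ℕ} (p : ℝ) (lam : ℝ) (S : Finset (Fin d → ℝ)) : Prop :=
  ∀ x ∈ S, ∀ y ∈ S, x ≠ y → (∑ i, |x i - y i| ^ p) ^ (1 / p) = lam

private def kusnerPhi (d M m : ℕ) (u : Fin d → ℝ) : (Fin d × Fin M) ⊕ Bool → ℝ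
  | Sum.inl ik => u ik.1 ^ ((ik.2 : ℕ) + 1)
  | Sum.inr false => 1
  | Sum.inr true => ∑ i, u i ^ m

private def kusnerConst (d M : ℕ) : (Fin d × Fin M) ⊕ Bool → ℝ
  | Sum.inr true => 1
  | _ => 0

private def kusnerFam (d M m : ℕ) (S : Finset (Fin d → ℝ)) :
    Option {x // x ∈ S} → ((Fin d × Fin M) ⊕ Bool) → ℝ
  | none => kusnerConst d M
  | some x => kusnerPhi d M m x.1

private lemma kusner_core (d m : ℕ) (hm2 : 2 ≤ m) (hme : m % 2 = 0)
    (S : Finset (Fin d → ℝ)) (L : ℝ) (hL : 0 < L)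
    (hdist : ∀ x ∈ S, ∀ y ∈ S, x ≠ y → ∑ i, (x i - y i) ^ (2 * m) = L) :
    S.card ≤ (m - 1) * d + 1 := by
  classical
  set M := m - 1 with hM
  have hmeven : Even m := Nat.even_iff.2 hme
  have hli : LinearIndependent ℝ (kusnerFam d M m S) := by
    rw [Fintype.linearIndependent_iff]
    intro g hg
    set c : {x // x ∈ S} → ℝ := fun x => g (some x) with hc
    rw [Fintype.sum_option] at hg
    have comp : ∀ z, g none * (kusnerConst d M z)
        + ∑ x : {x // x ∈ S}, c x * (kusnerPhi d M m x.1 z) = 0 := by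
      intro z
      have h1 := congrFun hg z
      simpa [kusnerFam, Finset.sum_apply, Pi.smul_apply, smul_eq_mul, hc] using h1
    have hσ : ∑ x : {x // x ∈ S}, c x = 0 := by
      have h := comp (Sum.inr false)
      simpa [kusnerPhi, kusnerConst] using h
    have hmom : ∀ (i : Fin d) (r : ℕ), r < m →
        ∑ x : {x // x ∈ S}, c x * (x.1 i) ^ r = 0 := by
      intro i r hr
      rcases Nat.eq_zero_or_pos r with h0 | h1
      · subst h0; simpa using hσ
      · have hrM : r - 1 < M := by omega
        have h := comp (Sum.inl (i, ⟨r - 1, hrM⟩))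
        have hr1 : r - 1 + 1 = r := by omega
        simpa [kusnerPhi, kusnerConst, hr1] using h
    have hdist' : ∀ x y : {x // x ∈ S}, x ≠ y →
        ∑ i, (x.1 i - y.1 i) ^ (2 * m) = L := fun x y hxy =>
      hdist x.1 x.2 y.1 y.2 (fun h => hxy (Subtype.ext h))
    -- Way 1 : diagonal evaluation
    have way1 : (∑ x : {x // x ∈ S}, ∑ y : {x // x ∈ S},
          c x * c y * (∑ i, (x.1 i - y.1 i) ^ (2 * m)))
        = - (L * ∑ x : {x // x ∈ S}, (c x) ^ 2) := by
      have hterm : ∀ x y : {x // x ∈ S},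
          c x * c y * (∑ i, (x.1 i - y.1 i) ^ (2 * m))
          = c x * c y * L - (if y = x then c x * c y * L else 0) := by
        intro x y
        by_cases hxy : y = x
        · subst hxy
          simp [sub_self, zero_pow (show 2 * m ≠ 0 by omega)]
        · rw [hdist' x y (fun h => hxy h.symm)]
          simp [hxy]
      calc (∑ x : {x // x ∈ S}, ∑ y : {x // x ∈ S},
              c x * c y * (∑ i, (x.1 i - y.1 i) ^ (2 * m)))
          = ∑ x : {x // x ∈ S}, ∑ y : {x // x ∈ S},
              (c x * c y * L - if y = x then c x * c y * L else 0) :=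
            Finset.sum_congr rfl fun x _ => Finset.sum_congr rfl fun y _ => hterm x y
        _ = ∑ x : {x // x ∈ S}, ((∑ y : {x // x ∈ S}, c x * c y * L) - c x * c x * L) := by
            refine Finset.sum_congr rfl fun x _ => ?_
            rw [Finset.sum_sub_distrib,
              Finset.sum_ite_eq' Finset.univ x (fun y => c x * c y * L)]
            simp
        _ = ∑ x : {x // x ∈ S}, (0 - c x * c x * L) := by
            refine Finset.sum_congr rfl fun x _ => ?_
            congr 1
            calc ∑ y : {x // x ∈ S}, c x * c y * L
                = (c x * L) * ∑ y : {x // x ∈ S}, c y := by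
                  rw [Finset.mul_sum]
                  exact Finset.sum_congr rfl fun y _ => by ring
              _ = 0 := by rw [hσ, mul_zero]
        _ = - (L * ∑ x : {x // x ∈ S}, (c x) ^ 2) := by
            rw [Finset.mul_sum, ← Finset.sum_neg_distrib]
            exact Finset.sum_congr rfl fun x _ => by ring
    -- Way 2 : binomial expansion
    have hfact : ∀ (w : ℝ) (A B : {x // x ∈ S} → ℝ),
        (∑ x : {x // x ∈ S}, ∑ y : {x // x ∈ S}, w * (A x * B y))
        = w * ((∑ x : {x // x ∈ S}, A x) * (∑ y : {x // x ∈ S}, B y)) := by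
      intro w A B
      rw [Finset.sum_mul_sum, Finset.mul_sum]
      exact Finset.sum_congr rfl fun x _ => by rw [Finset.mul_sum]
    have step : ∀ i : Fin d,
        (∑ x : {x // x ∈ S}, ∑ y : {x // x ∈ S}, c x * c y * ((x.1 i - y.1 i) ^ (2 * m)))
        = ((2 * m).choose m : ℝ) * (∑ x : {x // x ∈ S}, c x * (x.1 i) ^ m) ^ 2 := by
      intro i
      have expand : ∀ x y : {x // x ∈ S},
          c x * c y * ((x.1 i - y.1 i) ^ (2 * m))
          = ∑ k ∈ Finset.range (2 * m + 1),
              ((-1 : ℝ) ^ (2 * m - k) * ((2 * m).choose k : ℝ)) *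
              ((c x * (x.1 i) ^ k) * (c y * (y.1 i) ^ (2 * m - k))) := by
        intro x y
        rw [sub_eq_add_neg, add_pow, Finset.mul_sum]
        refine Finset.sum_congr rfl fun k hk => ?_
        rw [neg_pow]
        ring
      calc (∑ x : {x // x ∈ S}, ∑ y : {x // x ∈ S},
              c x * c y * ((x.1 i - y.1 i) ^ (2 * m)))
          = ∑ x : {x // x ∈ S}, ∑ y : {x // x ∈ S}, ∑ k ∈ Finset.range (2 * m + 1),
              ((-1 : ℝ) ^ (2 * m - k) * ((2 * m).choose k : ℝ)) *
              ((c x * (x.1 i) ^ k) * (c y * (y.1 i) ^ (2 * m - k))) :=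
            Finset.sum_congr rfl fun x _ => Finset.sum_congr rfl fun y _ => expand x y
        _ = ∑ x : {x // x ∈ S}, ∑ k ∈ Finset.range (2 * m + 1), ∑ y : {x // x ∈ S},
              ((-1 : ℝ) ^ (2 * m - k) * ((2 * m).choose k : ℝ)) *
              ((c x * (x.1 i) ^ k) * (c y * (y.1 i) ^ (2 * m - k))) :=
            Finset.sum_congr rfl fun x _ => Finset.sum_comm
        _ = ∑ k ∈ Finset.range (2 * m + 1), ∑ x : {x // x ∈ S}, ∑ y : {x // x ∈ S},
              ((-1 : ℝ) ^ (2 * m - k) * ((2 * m).choose k : ℝ)) *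
              ((c x * (x.1 i) ^ k) * (c y * (y.1 i) ^ (2 * m - k))) :=
            Finset.sum_comm
        _ = ∑ k ∈ Finset.range (2 * m + 1),
              ((-1 : ℝ) ^ (2 * m - k) * ((2 * m).choose k : ℝ)) *
              ((∑ x : {x // x ∈ S}, c x * (x.1 i) ^ k) *
               (∑ y : {x // x ∈ S}, c y * (y.1 i) ^ (2 * m - k))) :=
            Finset.sum_congr rfl fun k _ => hfact _ _ _
        _ = ((-1 : ℝ) ^ (2 * m - m) * ((2 * m).choose m : ℝ)) *
              ((∑ x : {x // x ∈ S}, c x * (x.1 i) ^ m) *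
               (∑ y : {x // x ∈ S}, c y * (y.1 i) ^ (2 * m - m))) := by
            refine Finset.sum_eq_single m (fun k hk hkm => ?_)
              (fun h => absurd (Finset.mem_range.2 (by omega)) h)
            have hk' := Finset.mem_range.1 hk
            rcases lt_or_gt_of_ne hkm with hlt | hgt
            · rw [hmom i k hlt]; ring
            · have h2 : 2 * m - k < m := by omega
              rw [hmom i _ h2]; ring
        _ = ((2 * m).choose m : ℝ) * (∑ x : {x // x ∈ S}, c x * (x.1 i) ^ m) ^ 2 := by
            have h1 : 2 * m - m = m := by omega
            rw [h1, Even.neg_one_pow hmeven]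
            ring
    have way2 : (∑ x : {x // x ∈ S}, ∑ y : {x // x ∈ S},
          c x * c y * (∑ i, (x.1 i - y.1 i) ^ (2 * m)))
        = ∑ i, ((2 * m).choose m : ℝ) * (∑ x : {x // x ∈ S}, c x * (x.1 i) ^ m) ^ 2 := by
      calc (∑ x : {x // x ∈ S}, ∑ y : {x // x ∈ S},
              c x * c y * (∑ i, (x.1 i - y.1 i) ^ (2 * m)))
          = ∑ x : {x // x ∈ S}, ∑ y : {x // x ∈ S}, ∑ i,
              c x * c y * ((x.1 i - y.1 i) ^ (2 * m)) :=
            Finset.sum_congr rfl fun x _ => Finset.sum_congr rfl fun y _ =>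
              Finset.mul_sum _ _ _
        _ = ∑ x : {x // x ∈ S}, ∑ i, ∑ y : {x // x ∈ S},
              c x * c y * ((x.1 i - y.1 i) ^ (2 * m)) :=
            Finset.sum_congr rfl fun x _ => Finset.sum_comm
        _ = ∑ i, ∑ x : {x // x ∈ S}, ∑ y : {x // x ∈ S},
              c x * c y * ((x.1 i - y.1 i) ^ (2 * m)) := Finset.sum_comm
        _ = ∑ i, ((2 * m).choose m : ℝ) * (∑ x : {x // x ∈ S}, c x * (x.1 i) ^ m) ^ 2 :=
            Finset.sum_congr rfl fun i _ => step i
    have hsq : ∀ x : {x // x ∈ S}, c x = 0 := by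
      have h0 : - (L * ∑ x : {x // x ∈ S}, (c x) ^ 2)
          = ∑ i, ((2 * m).choose m : ℝ) * (∑ x : {x // x ∈ S}, c x * (x.1 i) ^ m) ^ 2 := by
        rw [← way1, way2]
      have hR : (0:ℝ) ≤ ∑ i, ((2 * m).choose m : ℝ) *
          (∑ x : {x // x ∈ S}, c x * (x.1 i) ^ m) ^ 2 :=
        Finset.sum_nonneg fun i _ => mul_nonneg (Nat.cast_nonneg _) (sq_nonneg _)
      have hcc : (0:ℝ) ≤ ∑ x : {x // x ∈ S}, (c x) ^ 2 :=
        Finset.sum_nonneg fun x _ => sq_nonneg _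
      have hLs : L * (∑ x : {x // x ∈ S}, (c x) ^ 2) ≤ 0 := by linarith
      have hSig0 : (∑ x : {x // x ∈ S}, (c x) ^ 2) = 0 := by
        rcases lt_or_eq_of_le hcc with hpos | heq
        · exfalso; have := mul_pos hL hpos; linarith
        · exact heq.symm
      intro x
      have hx := (Finset.sum_eq_zero_iff_of_nonneg
        (fun y _ => sq_nonneg (c y))).1 hSig0 x (Finset.mem_univ x)
      exact (pow_eq_zero_iff two_ne_zero).1 hx
    intro o
    match o with
    | some x => exact hsq x
    | none =>
      have h := comp (Sum.inr true)
      have hz : ∑ x : {x // x ∈ S}, c x * (kusnerPhi d M m x.1 (Sum.inr true)) = 0 :=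
        Finset.sum_eq_zero fun x _ => by rw [hsq x, zero_mul]
      rw [hz, add_zero] at h
      simpa [kusnerConst] using h
  have hcard := hli.fintype_card_le_finrank
  rw [Module.finrank_pi] at hcard
  simp only [Fintype.card_option, Fintype.card_coe, Fintype.card_sum, Fintype.card_prod,
    Fintype.card_fin, Fintype.card_bool] at hcard
  have hcomm : d * M = M * d := Nat.mul_comm d M
  omega

/-- Kusner's problem, upper bound for `p ≡ 0 (mod 4)`: every equilateral set in
`ℓ_p^d` has at most `(p/2 - 1) d + 1` points. -/
theorem equilateral_card_le_of_four_dvd (p d : ℕ) (hp : p % 4 = 0) (hp0 : 0 < p)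
    (hd : 1 ≤ d) (S : Finset (Fin d → ℝ)) (lam : ℝ) (hlam : 0 < lam)
    (hS : IsEquilateralLp (p : ℝ) lam S) :
    S.card ≤ (p / 2 - 1) * d + 1 := by
  obtain ⟨q, hq⟩ := Nat.dvd_of_mod_eq_zero hp
  have hq1 : 1 ≤ q := by omega
  have hpeven : Even p := ⟨2 * q, by omega⟩
  have key : ∀ x ∈ S, ∀ y ∈ S, x ≠ y →
      ∑ i, (x i - y i) ^ (2 * (2 * q)) = lam ^ (2 * (2 * q)) := by
    intro x hx y hy hxy
    have h := hS x hx y hy hxy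
    have hA0 : (0:ℝ) ≤ ∑ i, |x i - y i| ^ (p : ℝ) :=
      Finset.sum_nonneg fun i _ => Real.rpow_nonneg (abs_nonneg _) _
    have hpne : (p : ℝ) ≠ 0 := Nat.cast_ne_zero.2 hp0.ne'
    have h2 : (∑ i, |x i - y i| ^ (p : ℝ)) = lam ^ (p : ℝ) := by
      have h3 := congrArg (fun z : ℝ => z ^ (p : ℝ)) h
      rwa [← Real.rpow_mul hA0, one_div, inv_mul_cancel₀ hpne, Real.rpow_one] at h3
    have hexp : ∀ a : ℝ, |a| ^ (p : ℝ) = a ^ (2 * (2 * q)) := by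
      intro a
      rw [Real.rpow_natCast, hpeven.pow_abs, show 2 * (2 * q) = p from by omega]
    have hlam' : lam ^ (2 * (2 * q)) = lam ^ (p : ℝ) := by
      rw [Real.rpow_natCast, show 2 * (2 * q) = p from by omega]
    rw [hlam', ← h2]
    exact Finset.sum_congr rfl fun i _ => (hexp (x i - y i)).symm
  have hcore := kusner_core d (2 * q) (by omega) (by omega) S
    (lam ^ (2 * (2 * q))) (pow_pos hlam _) key
  have hdiv : p / 2 = 2 * q := by omega
  rw [hdiv]
  exact hcore
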